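/- Let (A, B, C) be a recollement of triangulated categories with functors i^*, i_*, i^!, j_!, j^*, j_*. Let (E1, M1) and (E2, M2) be inflation factorization systems in A and C, respectively. Set E = {morphisms f in B | i^*(f) ∈ E1 and j^*(f) ∈ E2} and M = {morphisms g in B | i^!(g) ∈ M1 and j^*(g) ∈ M2}. Then (E, M) is an inflation factorization system in B. -/

import Mathlib

open CategoryTheory CategoryTheory.Limits CategoryTheory.Pretriangulated

namespace RecollementFS

variable (A B C : Type*) [Category A] [Category B] [Category C]
  [Preadditive A] [Preadditive B] [Preadditive C]
  [HasZeroObject A] [HasZeroObject B] [HasZeroObject C]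
  [HasShift A ℤ] [HasShift B ℤ] [HasShift C ℤ]
  [∀ n : ℤ, (shiftFunctor A n).Additive] [∀ n : ℤ, (shiftFunctor B n).Additive]
  [∀ n : ℤ, (shiftFunctor C n).Additive]
  [Pretriangulated A] [Pretriangulated B] [Pretriangulated C]

/-- A recollement of triangulated categories `(A, B, C)`. -/
structure TriangulatedRecollement where
  /-- `i_* : A ⥤ B` -/
  iStar : A ⥤ B
  /-- `i^* : B ⥤ A` -/
  iUpperStar : B ⥤ A
  /-- `i^! : B ⥤ A` -/
  iShriek : B ⥤ A
  /-- `j^* : B ⥤ C` -/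
  jUpperStar : B ⥤ C
  /-- `j_! : C ⥤ B` -/
  jShriek : C ⥤ B
  /-- `j_* : C ⥤ B` -/
  jStar : C ⥤ B
  iStar_commShift : iStar.CommShift ℤ
  iUpperStar_commShift : iUpperStar.CommShift ℤ
  iShriek_commShift : iShriek.CommShift ℤ
  jUpperStar_commShift : jUpperStar.CommShift ℤ
  jShriek_commShift : jShriek.CommShift ℤ
  jStar_commShift : jStar.CommShift ℤ
  iStar_triangulated : letI := iStar_commShift; iStar.IsTriangulated
  iUpperStar_triangulated : letI := iUpperStar_commShift; iUpperStar.IsTriangulated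
  iShriek_triangulated : letI := iShriek_commShift; iShriek.IsTriangulated
  jUpperStar_triangulated : letI := jUpperStar_commShift; jUpperStar.IsTriangulated
  jShriek_triangulated : letI := jShriek_commShift; jShriek.IsTriangulated
  jStar_triangulated : letI := jStar_commShift; jStar.IsTriangulated
  /-- `i^* ⊣ i_*` -/
  adj₁ : iUpperStar ⊣ iStar
  /-- `i_* ⊣ i^!` -/
  adj₂ : iStar ⊣ iShriek
  /-- `j_! ⊣ j^*` -/
  adj₃ : jShriek ⊣ jUpperStar
  /-- `j^* ⊣ j_*` -/
  adj₄ : jUpperStar ⊣ jStar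
  iStar_full : iStar.Full
  iStar_faithful : iStar.Faithful
  jShriek_full : jShriek.Full
  jShriek_faithful : jShriek.Faithful
  jStar_full : jStar.Full
  jStar_faithful : jStar.Faithful
  /-- `j^*(X) ≅ 0` iff `X` lies in the essential image of `i_*`. -/
  isZero_iff : ∀ X : B, IsZero (jUpperStar.obj X) ↔ ∃ Y : A, Nonempty (iStar.obj Y ≅ X)
  /-- the distinguished triangle `i_* i^! X ⟶ X ⟶ j_* j^* X ⟶ (i_* i^! X)⟦1⟧`. -/
  triangle₁ : ∀ X : B, ∃ h : jStar.obj (jUpperStar.obj X) ⟶ (iStar.obj (iShriek.obj X))⟦(1 : ℤ)⟧,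
    Triangle.mk (adj₂.counit.app X) (adj₄.unit.app X) h ∈ distTriang B
  /-- the distinguished triangle `j_! j^* X ⟶ X ⟶ i_* i^* X ⟶ (j_! j^* X)⟦1⟧`. -/
  triangle₂ : ∀ X : B, ∃ h : iStar.obj (iUpperStar.obj X) ⟶ (jShriek.obj (jUpperStar.obj X))⟦(1 : ℤ)⟧,
    Triangle.mk (adj₃.counit.app X) (adj₁.unit.app X) h ∈ distTriang B

variable {𝒟 : Type*} [Category 𝒟] [Preadditive 𝒟] [HasZeroObject 𝒟]
  [HasShift 𝒟 ℤ] [∀ n : ℤ, (shiftFunctor 𝒟 n).Additive] [Pretriangulated 𝒟]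

/-- `Z` is a cone of `f : X ⟶ Y` if it fits in a distinguished triangle
`X ⟶ Y ⟶ Z ⟶ X⟦1⟧`. -/
def IsConeOf {X Y : 𝒟} (f : X ⟶ Y) (Z : 𝒟) : Prop :=
  ∃ (g : Y ⟶ Z) (h : Z ⟶ X⟦(1 : ℤ)⟧), Triangle.mk f g h ∈ distTriang 𝒟

/-- `l ⊥ r` iff `Hom(C_l, C_r) = 0` and `Hom(C_l, C_r⟦-1⟧) = 0` for cones
`C_l` of `l` and `C_r` of `r`. -/
def ConePerp {X Y Z W : 𝒟} (l : X ⟶ Y) (r : Z ⟶ W) : Prop :=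
  ∀ (Cl Cr : 𝒟), IsConeOf l Cl → IsConeOf r Cr →
    (∀ φ : Cl ⟶ Cr, φ = 0) ∧ (∀ φ : Cl ⟶ Cr⟦(-1 : ℤ)⟧, φ = 0)

/-- An inflation factorization system `(L, R)` in a triangulated category. -/
structure IsInflFactorizationSystem (L R : MorphismProperty 𝒟) : Prop where
  factor : ∀ {X Y : 𝒟} (f : X ⟶ Y),
    ∃ (K : 𝒟) (l : X ⟶ K) (r : K ⟶ Y), L l ∧ R r ∧ l ≫ r = f
  left_eq : ∀ {X Y : 𝒟} (f : X ⟶ Y),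
    L f ↔ ∀ {Z W : 𝒟} (g : Z ⟶ W), R g → ConePerp f g
  right_eq : ∀ {Z W : 𝒟} (g : Z ⟶ W),
    R g ↔ ∀ {X Y : 𝒟} (f : X ⟶ Y), L f → ConePerp f g

section Aux
open ZeroObject
set_option linter.unusedSectionVars false

lemma exists_cone {X Y : 𝒟} (f : X ⟶ Y) : ∃ Z, IsConeOf f Z := by
  obtain ⟨Z, g, h, hT⟩ := Pretriangulated.distinguished_cocone_triangle f
  exact ⟨Z, g, h, hT⟩

lemma isConeOf_of_arrowIso {X Y X' Y' : 𝒟} {f : X ⟶ Y} {f' : X' ⟶ Y'}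
    (a : X ≅ X') (b : Y ≅ Y') (comm : f ≫ b.hom = a.hom ≫ f') {Z : 𝒟}
    (hZ : IsConeOf f Z) : IsConeOf f' Z := by
  obtain ⟨g, h, hT⟩ := hZ
  refine ⟨b.inv ≫ g, h ≫ (shiftFunctor 𝒟 (1:ℤ)).map a.hom,
    Pretriangulated.isomorphic_distinguished _ hT _ ?_⟩
  refine Triangle.isoMk _ _ a.symm b.symm (Iso.refl Z) ?_ ?_ ?_
  · dsimp [Triangle.mk]
    rw [← cancel_mono b.hom, Category.assoc, Category.assoc, b.inv_hom_id, Category.comp_id, comm, Iso.inv_hom_id_assoc]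
  · simp [Triangle.mk]
  · dsimp [Triangle.mk]
    simp only [← Functor.map_comp, Category.assoc, a.hom_inv_id, Category.comp_id]
    simp

lemma isConeOf_iso_target {X Y : 𝒟} {f : X ⟶ Y} {Z Z' : 𝒟} (hZ : IsConeOf f Z)
    (e : Z ≅ Z') : IsConeOf f Z' := by
  obtain ⟨g, h, hT⟩ := hZ
  refine ⟨g ≫ e.hom, e.inv ≫ h, Pretriangulated.isomorphic_distinguished _ hT _ ?_⟩
  exact Triangle.isoMk _ _ (Iso.refl _) (Iso.refl _) e.symm (by simp [Triangle.mk]) (by simp [Triangle.mk]) (by simp [Triangle.mk])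

lemma cone_unique {X Y : 𝒟} {f : X ⟶ Y} {Z Z' : 𝒟} (hZ : IsConeOf f Z)
    (hZ' : IsConeOf f Z') : Nonempty (Z ≅ Z') := by
  obtain ⟨g, h, hT⟩ := hZ
  obtain ⟨g', h', hT'⟩ := hZ'
  obtain ⟨c, hc₁, hc₂⟩ := Pretriangulated.complete_distinguished_triangle_morphism
    (Triangle.mk f g h) (Triangle.mk f g' h') hT hT' (𝟙 X) (𝟙 Y) (by simp [Triangle.mk])
  have : IsIso c := by
    refine Pretriangulated.isIso₃_of_isIso₁₂
      (Triangle.homMk _ _ (𝟙 X) (𝟙 Y) c (by simp [Triangle.mk]) hc₁ hc₂) hT hT' ?_ ?_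
    · exact (inferInstance : IsIso (𝟙 X))
    · exact (inferInstance : IsIso (𝟙 Y))
  exact ⟨@asIso _ _ _ _ c this⟩

/-- object-level perpendicularity -/
def PerpObj (U V : 𝒟) : Prop :=
  (∀ φ : U ⟶ V, φ = 0) ∧ (∀ φ : U ⟶ V⟦(-1 : ℤ)⟧, φ = 0)

lemma allZero_source_iso {U U' V : 𝒟} (e : U ≅ U') (h : ∀ φ : U' ⟶ V, φ = 0) :
    ∀ φ : U ⟶ V, φ = 0 := fun φ => by
  have : e.inv ≫ φ = 0 := h _
  rw [← e.hom_inv_id_assoc φ, this, comp_zero]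

lemma allZero_target_iso {U V V' : 𝒟} (e : V ≅ V') (h : ∀ φ : U ⟶ V', φ = 0) :
    ∀ φ : U ⟶ V, φ = 0 := fun φ => by
  have : φ ≫ e.hom = 0 := h _
  rw [← Category.comp_id φ, ← e.hom_inv_id, ← Category.assoc, this, zero_comp]

lemma perpObj_of_iso {U U' V V' : 𝒟} (eU : U ≅ U') (eV : V ≅ V')
    (h : PerpObj U' V') : PerpObj U V := by
  constructor
  · exact allZero_source_iso eU (allZero_target_iso eV h.1)
  · exact allZero_source_iso eU
      (allZero_target_iso ((shiftFunctor 𝒟 (-1:ℤ)).mapIso eV) h.2)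

lemma conePerp_iff {X Y Z W : 𝒟} {l : X ⟶ Y} {r : Z ⟶ W} {Cl Cr : 𝒟}
    (hl : IsConeOf l Cl) (hr : IsConeOf r Cr) : ConePerp l r ↔ PerpObj Cl Cr := by
  constructor
  · intro h
    exact h Cl Cr hl hr
  · intro h Cl' Cr' hl' hr'
    obtain ⟨eL⟩ := cone_unique hl' hl
    obtain ⟨eR⟩ := cone_unique hr' hr
    exact perpObj_of_iso eL eR h

lemma isZero_cone_of_isIso {X Y : 𝒟} {f : X ⟶ Y} (hf : IsIso f) {Z : 𝒟}
    (hZ : IsConeOf f Z) : IsZero Z := by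
  have h1 : IsConeOf (𝟙 X) ((contractibleTriangle X).obj₃) :=
    ⟨(contractibleTriangle X).mor₂, (contractibleTriangle X).mor₃,
      Pretriangulated.contractible_distinguished X⟩
  have h0 : IsConeOf f ((contractibleTriangle X).obj₃) :=
    isConeOf_of_arrowIso (Iso.refl X) (asIso f) (by simp) h1
  obtain ⟨e⟩ := cone_unique hZ h0
  have hz : IsZero ((contractibleTriangle X).obj₃) := isZero_zero 𝒟
  exact IsZero.of_iso hz e

lemma isIso_of_isZero_cone {X Y : 𝒟} {f : X ⟶ Y} {Z : 𝒟} (hZ : IsConeOf f Z)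
    (h : IsZero Z) : IsIso f := by
  obtain ⟨g, h', hT⟩ := hZ
  exact (Pretriangulated.Triangle.isZero₃_iff_isIso₁ _ hT).1 h

lemma isIso_of_isZero_both {X Y : 𝒟} (hX : IsZero X) (hY : IsZero Y) (f : X ⟶ Y) :
    IsIso f :=
  ⟨0, hX.eq_of_src _ _, hY.eq_of_src _ _⟩

lemma isConeOf_map {𝒟' : Type*} [Category 𝒟'] [Preadditive 𝒟'] [HasZeroObject 𝒟']
    [HasShift 𝒟' ℤ] [∀ n : ℤ, (shiftFunctor 𝒟' n).Additive] [Pretriangulated 𝒟']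
    (F : 𝒟 ⥤ 𝒟') [F.CommShift ℤ] [F.IsTriangulated] {X Y : 𝒟} {f : X ⟶ Y} {Z : 𝒟}
    (hZ : IsConeOf f Z) : IsConeOf (F.map f) (F.obj Z) := by
  obtain ⟨g, h, hT⟩ := hZ
  exact ⟨F.map g, F.map h ≫ (F.commShiftIso (1 : ℤ)).hom.app X, F.map_distinguished _ hT⟩

section IFS

variable {L R : MorphismProperty 𝒟} (h : IsInflFactorizationSystem L R)
include h

lemma IFS_right_transfer {Z W Z' W' : 𝒟} {g : Z ⟶ W} {g' : Z' ⟶ W'} {Cg Cg' : 𝒟}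
    (hg : IsConeOf g Cg) (hg' : IsConeOf g' Cg') (e : Cg ≅ Cg') (hR : R g) : R g' := by
  rw [h.right_eq] at hR ⊢
  intro X Y f hf Cl Cr hCl hCr
  refine perpObj_of_iso (Iso.refl Cl) ?_ ((conePerp_iff hCl hg).1 (hR f hf)) |>.imp id id
  exact ((cone_unique hCr hg').some.trans e.symm)

lemma IFS_left_transfer {Z W Z' W' : 𝒟} {g : Z ⟶ W} {g' : Z' ⟶ W'} {Cg Cg' : 𝒟}
    (hg : IsConeOf g Cg) (hg' : IsConeOf g' Cg') (e : Cg ≅ Cg') (hL : L g) : L g' := by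
  rw [h.left_eq] at hL ⊢
  intro X Y f hf Cl Cr hCl hCr
  refine perpObj_of_iso ?_ (Iso.refl Cr) ((conePerp_iff hg hCr).1 (hL f hf)) |>.imp id id
  exact ((cone_unique hCl hg').some.trans e.symm)

lemma IFS_right_arrowIso {Z W Z' W' : 𝒟} {g : Z ⟶ W} {g' : Z' ⟶ W'}
    (a : Z ≅ Z') (b : W ≅ W') (comm : g ≫ b.hom = a.hom ≫ g') (hR : R g) : R g' := by
  obtain ⟨Cg, hCg⟩ := exists_cone g
  exact IFS_right_transfer h hCg (isConeOf_of_arrowIso a b comm hCg) (Iso.refl _) hR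

lemma IFS_left_arrowIso {Z W Z' W' : 𝒟} {g : Z ⟶ W} {g' : Z' ⟶ W'}
    (a : Z ≅ Z') (b : W ≅ W') (comm : g ≫ b.hom = a.hom ≫ g') (hL : L g) : L g' := by
  obtain ⟨Cg, hCg⟩ := exists_cone g
  exact IFS_left_transfer h hCg (isConeOf_of_arrowIso a b comm hCg) (Iso.refl _) hL

lemma IFS_right_of_isIso {Z W : 𝒟} (g : Z ⟶ W) (hg : IsIso g) : R g := by
  rw [h.right_eq]
  intro X Y f hf Cl Cr hCl hCr
  have hz : IsZero Cr := isZero_cone_of_isIso hg hCr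
  constructor
  · exact fun φ => hz.eq_of_tgt _ _
  · exact fun φ => ((shiftFunctor 𝒟 (-1:ℤ)).map_isZero hz).eq_of_tgt _ _

lemma IFS_left_of_isIso {Z W : 𝒟} (g : Z ⟶ W) (hg : IsIso g) : L g := by
  rw [h.left_eq]
  intro X Y f hf Cl Cr hCl hCr
  have hz : IsZero Cl := isZero_cone_of_isIso hg hCl
  constructor
  · exact fun φ => hz.eq_of_src _ _
  · exact fun φ => hz.eq_of_src _ _

end IFS

lemma allZero_equiv {M N : Type*} [Zero M] [Zero N] (e : M ≃ N)
    (h : ∀ x : M, x = 0) : ∀ y : N, y = 0 := fun y => by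
  have h1 : e.symm y = e.symm 0 := (h _).trans (h _).symm
  have := congrArg e h1
  rwa [e.apply_symm_apply, e.apply_symm_apply] at this

end Aux
section Key

variable {B' C' : Type*} [Category B'] [Category C'] [Preadditive B'] [Preadditive C']
  [HasZeroObject B'] [HasZeroObject C'] [HasShift B' ℤ] [HasShift C' ℤ]
  [∀ n : ℤ, (shiftFunctor B' n).Additive] [∀ n : ℤ, (shiftFunctor C' n).Additive]
  [Pretriangulated B'] [Pretriangulated C']

lemma key_factor (F : B' ⥤ C') (G : C' ⥤ B') [F.CommShift ℤ] [G.CommShift ℤ]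
    [F.IsTriangulated] [G.Additive] (adj : F ⊣ G) [∀ Z, IsIso (adj.counit.app Z)]
    {X Y : B'} (f : X ⟶ Y) {N : C'} (l' : F.obj X ⟶ N) (r' : N ⟶ F.obj Y)
    (hf : F.map f = l' ≫ r')
    {V : C'} (c : F.obj Y ⟶ V) (d : V ⟶ N⟦(1 : ℤ)⟧)
    (hT : Triangle.mk r' c d ∈ distTriang C') :
    ∃ (W : B') (p : W ⟶ Y) (t : X ⟶ W) (e : G.obj V ⟶ W⟦(1 : ℤ)⟧) (γ : F.obj W ≅ N),
      (Triangle.mk p (adj.unit.app Y ≫ G.map c) e ∈ distTriang B') ∧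
      t ≫ p = f ∧ γ.hom ≫ r' = F.map p ∧ F.map t ≫ γ.hom = l' := by
  have hrc : r' ≫ c = 0 := Pretriangulated.comp_distTriang_mor_zero₁₂ _ hT
  obtain ⟨w, hw⟩ : ∃ w : Y ⟶ G.obj V, w = adj.unit.app Y ≫ G.map c := ⟨_, rfl⟩
  obtain ⟨W, p, e, hTw⟩ := Pretriangulated.distinguished_cocone_triangle₁ w
  -- the map f composes to zero with w
  have hfw : f ≫ w = 0 := by
    rw [hw, ← Category.assoc, ← adj.unit_naturality f, Category.assoc, ← G.map_comp, hf,
      Category.assoc, hrc, comp_zero, G.map_zero, comp_zero]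
  obtain ⟨t₀, ht₀⟩ := Pretriangulated.Triangle.coyoneda_exact₂ _ hTw f hfw
  dsimp [Triangle.mk, Functor.mapTriangle, Triangle.invRotate, Triangle.homMk] at t₀ ht₀
  -- compare F of the fiber triangle with the given triangle over c
  have hTF := F.map_distinguished _ hTw
  have hεc : F.map w ≫ adj.counit.app V = c := by
    rw [hw, F.map_comp, Category.assoc, adj.counit_naturality c,
      adj.left_triangle_components_assoc]
  obtain ⟨m₃, hm₃⟩ : ∃ m₃ : V ⟶ (F.obj W)⟦(1 : ℤ)⟧,
      m₃ = inv (adj.counit.app V) ≫ (F.map e ≫ (F.commShiftIso (1 : ℤ)).hom.app W) := ⟨_, rfl⟩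
  have hT'' : Triangle.mk (F.map p) c m₃ ∈ distTriang C' := by
    refine Pretriangulated.isomorphic_distinguished _ hTF _ ?_
    refine Pretriangulated.Triangle.isoMk _ _ (Iso.refl _) (Iso.refl _)
      (asIso (adj.counit.app V)).symm ?_ ?_ ?_
    · dsimp [Triangle.mk, Functor.mapTriangle, Triangle.invRotate, Triangle.homMk]; simp
    · dsimp [Triangle.mk, Functor.mapTriangle, Triangle.invRotate, Triangle.homMk]
      rw [Category.id_comp, ← hεc, Category.assoc, IsIso.hom_inv_id, Category.comp_id]
    · dsimp [Triangle.mk, Functor.mapTriangle, Triangle.invRotate, Triangle.homMk]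
      rw [hm₃, Category.assoc, CategoryTheory.Functor.map_id, Category.comp_id]
  obtain ⟨a', ha₁', ha₂'⟩ := Pretriangulated.complete_distinguished_triangle_morphism₁
    (Triangle.mk (F.map p) c m₃) (Triangle.mk r' c d) hT'' hT (𝟙 _) (𝟙 _)
      (by dsimp [Triangle.mk, Functor.mapTriangle, Triangle.invRotate, Triangle.homMk]; rw [Category.comp_id, Category.id_comp])
  obtain ⟨a, ha⟩ : ∃ a : F.obj W ⟶ N, a = a' := ⟨_, rfl⟩
  rw [← ha] at ha₁' ha₂'
  dsimp [Triangle.mk, Functor.mapTriangle, Triangle.invRotate, Triangle.homMk] at ha₁' ha₂'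
  rw [Category.comp_id] at ha₁'
  rw [Category.id_comp] at ha₂'
  have ha₁ : F.map p = a ≫ r' := ha₁'
  have ha₂ : m₃ ≫ a⟦(1 : ℤ)⟧' = d := ha₂'
  clear ha₁' ha₂' ha a'
  have haiso : IsIso a := by
    refine Pretriangulated.isIso₁_of_isIso₂₃
      (Pretriangulated.Triangle.homMk (Triangle.mk (F.map p) c m₃) (Triangle.mk r' c d)
        a (𝟙 _) (𝟙 _) (by dsimp [Triangle.mk, Functor.mapTriangle, Triangle.invRotate, Triangle.homMk]; rw [Category.comp_id, ← ha₁])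
        (by dsimp [Triangle.mk, Functor.mapTriangle, Triangle.invRotate, Triangle.homMk]; rw [Category.comp_id, Category.id_comp])
        (by dsimp [Triangle.mk, Functor.mapTriangle, Triangle.invRotate, Triangle.homMk]; rw [Category.id_comp]; exact ha₂))
      hT'' hT ?_ ?_
    · dsimp [Triangle.mk, Functor.mapTriangle, Triangle.invRotate, Triangle.homMk]; infer_instance
    · dsimp [Triangle.mk, Functor.mapTriangle, Triangle.invRotate, Triangle.homMk]; infer_instance
  -- the error term
  have hδr : ((F.map t₀ ≫ a - l' : F.obj X ⟶ N)) ≫ r' = 0 := by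
    rw [Preadditive.sub_comp, Category.assoc, ← ha₁, ← F.map_comp, ← ht₀, hf, sub_self]
  obtain ⟨ψ, hψ⟩ := Pretriangulated.Triangle.coyoneda_exact₂ _
    (Pretriangulated.inv_rot_of_distTriang _ hT) _ hδr
  -- the fiber triangle of p, inverse-rotated
  have hTwinv := Pretriangulated.inv_rot_of_distTriang _ hTw
  obtain ⟨k, hk⟩ : ∃ k : (G.obj V)⟦(-1 : ℤ)⟧ ⟶ W,
      k = (Triangle.mk p w e).invRotate.mor₁ := ⟨_, rfl⟩
  have hkp : k ≫ p = 0 := by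
    rw [hk]; exact Pretriangulated.comp_distTriang_mor_zero₁₂ _ hTwinv
  -- compare F of the rotated fiber triangle with the rotated given triangle
  have hT₁ := F.map_distinguished _ hTwinv
  obtain ⟨a₀, ha₀₁', ha₀₃⟩ := Pretriangulated.complete_distinguished_triangle_morphism₁
    (F.mapTriangle.obj ((Triangle.mk p w e).invRotate))
    ((Triangle.mk r' c d).invRotate) hT₁
    (Pretriangulated.inv_rot_of_distTriang _ hT) a (𝟙 _)
    (by dsimp [Triangle.mk, Functor.mapTriangle, Triangle.invRotate, Triangle.homMk]; rw [Category.comp_id, ← ha₁])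
  dsimp only [Triangle.mk, Functor.mapTriangle, Triangle.invRotate] at a₀ ha₀₁' ha₀₃
  have ha₀₁ : F.map k ≫ a = a₀ ≫ (Triangle.mk r' c d).invRotate.mor₁ := by
    rw [hk]; exact ha₀₁'
  clear ha₀₁'
  have ha₀iso : IsIso a₀ := by
    refine Pretriangulated.isIso₁_of_isIso₂₃
      (Pretriangulated.Triangle.homMk
        (F.mapTriangle.obj ((Triangle.mk p w e).invRotate))
        ((Triangle.mk r' c d).invRotate) a₀ a (𝟙 _)
        (by have h' := ha₀₁; rw [hk] at h'; exact h')
        (by dsimp [Triangle.mk, Functor.mapTriangle, Triangle.invRotate, Triangle.homMk]; rw [Category.comp_id, ← ha₁]) ha₀₃) hT₁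
      (Pretriangulated.inv_rot_of_distTriang _ hT) haiso ?_
    dsimp [Triangle.mk, Functor.mapTriangle, Triangle.invRotate, Triangle.homMk]; infer_instance
  -- the canonical identification of F ((G V)⟦-1⟧) with V⟦-1⟧
  obtain ⟨σ, hσ⟩ : ∃ σ : ((G.obj V)⟦(-1 : ℤ)⟧ : B') ≅ G.obj (V⟦(-1 : ℤ)⟧),
    σ = ((G.commShiftIso (-1 : ℤ)).app V).symm := ⟨_, rfl⟩
  obtain ⟨χ, hχ⟩ : ∃ χ : F.obj ((G.obj V)⟦(-1 : ℤ)⟧) ≅ V⟦(-1 : ℤ)⟧,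
    χ = F.mapIso σ ≪≫ asIso (adj.counit.app (V⟦(-1 : ℤ)⟧)) := ⟨_, rfl⟩
  obtain ⟨u, hu⟩ : ∃ u : (V⟦(-1 : ℤ)⟧ : C') ⟶ V⟦(-1 : ℤ)⟧, u = χ.inv ≫ a₀ := ⟨_, rfl⟩
  have huiso : IsIso u := by rw [hu]; infer_instance
  obtain ⟨ψ'', hψ''⟩ : ∃ ψ'' : X ⟶ (G.obj V)⟦(-1 : ℤ)⟧,
    ψ'' = (adj.homEquiv X (V⟦(-1 : ℤ)⟧)) (ψ ≫ @inv _ _ _ _ u huiso) ≫ σ.inv := ⟨_, rfl⟩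
  have h1 : ∀ (Z : C') (g : F.obj X ⟶ Z), F.map ((adj.homEquiv X Z) g) ≫ adj.counit.app Z = g := by
    intro Z g
    rw [Adjunction.homEquiv_unit, F.map_comp, Category.assoc, adj.counit_naturality g,
      adj.left_triangle_components_assoc]
  have hFψ' : F.map ψ'' ≫ a₀ = ψ := by
    have h2 : F.map σ.inv ≫ a₀ = adj.counit.app (V⟦(-1 : ℤ)⟧) ≫ u := by
      rw [hu, hχ]
      dsimp [Triangle.mk, Functor.mapTriangle, Triangle.invRotate, Triangle.homMk]
      simp
    rw [hψ'', F.map_comp, Category.assoc, h2, ← Category.assoc, h1, Category.assoc]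
    exact (congrArg (ψ ≫ ·) (IsIso.inv_hom_id u)).trans (Category.comp_id ψ)
  refine ⟨W, p, t₀ - ψ'' ≫ k, e, asIso a, by rw [← hw]; exact hTw, ?_, ha₁.symm, ?_⟩
  · rw [Preadditive.sub_comp, Category.assoc, hkp, comp_zero, sub_zero, ← ht₀]
  · dsimp [Triangle.mk, Functor.mapTriangle, Triangle.invRotate, Triangle.homMk]
    rw [F.map_sub, Preadditive.sub_comp, F.map_comp, Category.assoc, ha₀₁]
    have hh : F.map ψ'' ≫ a₀ ≫ (Triangle.mk r' c d).invRotate.mor₁ = ψ ≫ (Triangle.mk r' c d).invRotate.mor₁ := by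
      rw [← hFψ']; exact (Category.assoc _ _ _).symm
    exact (congrArg (F.map t₀ ≫ a - ·) (hh.trans hψ.symm)).trans (sub_sub_cancel _ _)

end Key
lemma arrow_comm_symm {X Y X' Y' : 𝒟} (a : X ≅ X') (b : Y ≅ Y') {g : X ⟶ Y} {g' : X' ⟶ Y'}
    (comm : g ≫ b.hom = a.hom ≫ g') : g' ≫ b.inv = a.inv ≫ g := by
  rw [← cancel_mono b.hom, Category.assoc, Category.assoc, b.inv_hom_id, Category.comp_id,
    comm, Iso.inv_hom_id_assoc]

/-- gluing inflation factorization systems along a recollement of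
triangulated categories. -/
theorem glue_inflFactorizationSystem_of_recollement
    (R : TriangulatedRecollement A B C)
    (E₁ M₁ : MorphismProperty A) (E₂ M₂ : MorphismProperty C)
    (hA : IsInflFactorizationSystem E₁ M₁) (hC : IsInflFactorizationSystem E₂ M₂) :
    IsInflFactorizationSystem
      (fun _ _ f => E₁ (R.iUpperStar.map f) ∧ E₂ (R.jUpperStar.map f))
      (fun _ _ g => M₁ (R.iShriek.map g) ∧ M₂ (R.jUpperStar.map g)) := by
  letI := R.iStar_commShift
  letI := R.iUpperStar_commShift
  letI := R.iShriek_commShift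
  letI := R.jUpperStar_commShift
  letI := R.jShriek_commShift
  letI := R.jStar_commShift
  letI := R.iStar_triangulated
  letI := R.iUpperStar_triangulated
  letI := R.iShriek_triangulated
  letI := R.jUpperStar_triangulated
  letI := R.jShriek_triangulated
  letI := R.jStar_triangulated
  letI := R.iStar_full
  letI := R.iStar_faithful
  letI := R.jShriek_full
  letI := R.jShriek_faithful
  letI := R.jStar_full
  letI := R.jStar_faithful
  -- basic vanishing facts
  have hZji : ∀ a : A, IsZero (R.jUpperStar.obj (R.iStar.obj a)) := fun a =>
    (R.isZero_iff _).2 ⟨a, ⟨Iso.refl _⟩⟩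
  have hZij : ∀ c₀ : C, IsZero (R.iShriek.obj (R.jStar.obj c₀)) := by
    intro c₀
    rw [IsZero.iff_id_eq_zero]
    exact allZero_equiv (R.adj₂.homEquiv _ _)
      (allZero_equiv (R.adj₄.homEquiv _ _) (fun x => (hZji _).eq_of_src _ _)) _
  have hZij' : ∀ c₀ : C, IsZero (R.iUpperStar.obj (R.jShriek.obj c₀)) := by
    intro c₀
    rw [IsZero.iff_id_eq_zero]
    exact allZero_equiv ((R.adj₁.homEquiv _ _).symm)
      (allZero_equiv ((R.adj₃.homEquiv _ _).symm) (fun x => (hZji _).eq_of_tgt _ _)) _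
  -- gluing perpendicularity downward
  have hperp_fwd : ∀ (U V : B), PerpObj (R.iUpperStar.obj U) (R.iShriek.obj V) →
      PerpObj (R.jUpperStar.obj U) (R.jUpperStar.obj V) → PerpObj U V := by
    intro U V hA' hC'
    obtain ⟨h₃, hT₁⟩ := R.triangle₁ V
    constructor
    · intro φ
      have hz2 : ∀ ξ : U ⟶ R.jStar.obj (R.jUpperStar.obj V), ξ = 0 :=
        allZero_equiv (R.adj₄.homEquiv _ _) hC'.1
      obtain ⟨ψ, hψ⟩ := Pretriangulated.Triangle.coyoneda_exact₂ _ hT₁ φ (hz2 _)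
      have hz1 : ∀ ξ : U ⟶ R.iStar.obj (R.iShriek.obj V), ξ = 0 :=
        allZero_equiv (R.adj₁.homEquiv _ _) hA'.1
      rw [hψ, hz1 ψ]; exact zero_comp
    · intro φ
      have hT₃ := Pretriangulated.inv_rot_of_distTriang _ (Pretriangulated.inv_rot_of_distTriang
        _ (Pretriangulated.inv_rot_of_distTriang _ hT₁))
      have hz2 : ∀ ξ : U ⟶ (R.jStar.obj (R.jUpperStar.obj V))⟦(-1 : ℤ)⟧, ξ = 0 := by
        refine allZero_target_iso ((R.jStar.commShiftIso (-1 : ℤ)).app _).symm ?_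
        exact allZero_equiv (R.adj₄.homEquiv _ _) hC'.2
      obtain ⟨ψ, hψ⟩ := Pretriangulated.Triangle.coyoneda_exact₂ _ hT₃ φ (hz2 _)
      have hz1 : ∀ ξ : U ⟶ (R.iStar.obj (R.iShriek.obj V))⟦(-1 : ℤ)⟧, ξ = 0 := by
        refine allZero_target_iso ((R.iStar.commShiftIso (-1 : ℤ)).app _).symm ?_
        exact allZero_equiv (R.adj₁.homEquiv _ _) hA'.2
      rw [hψ, hz1 ψ]; exact zero_comp
  constructor
  -- FACTORIZATION
  · intro X Y f
    obtain ⟨N₂, l₂, r₂, hE₂, hM₂, hlr₂⟩ := hC.factor (R.jUpperStar.map f)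
    obtain ⟨V₂, c₂, d₂, hTV₂⟩ := Pretriangulated.distinguished_cocone_triangle r₂
    obtain ⟨W, p, t, e₂, γ₂, hTw, htp, hγ₂r, hγ₂l⟩ :=
      key_factor R.jUpperStar R.jStar R.adj₄ f l₂ r₂ hlr₂.symm c₂ d₂ hTV₂
    obtain ⟨N₁, l₁, r₁, hE₁, hM₁, hlr₁⟩ := hA.factor (R.iUpperStar.map t)
    obtain ⟨V₁, c₁, d₁, hTV₁⟩ := Pretriangulated.distinguished_cocone_triangle r₁
    obtain ⟨K, s, l, e₁, γ₁, hTs, hls, hγ₁r, hγ₁l⟩ :=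
      key_factor R.iUpperStar R.iStar R.adj₁ t l₁ r₁ hlr₁.symm c₁ d₁ hTV₁
    have hconeS : IsConeOf s (R.iStar.obj V₁) := ⟨_, _, hTs⟩
    have hconeP : IsConeOf p (R.jStar.obj V₂) := ⟨_, _, hTw⟩
    have hjs : IsIso (R.jUpperStar.map s) :=
      isIso_of_isZero_cone (isConeOf_map R.jUpperStar hconeS) (hZji V₁)
    have hip : IsIso (R.iShriek.map p) :=
      isIso_of_isZero_cone (isConeOf_map R.iShriek hconeP) (hZij V₂)
    have hMis : M₁ (R.iShriek.map s) :=
      IFS_right_transfer hA ⟨c₁, d₁, hTV₁⟩ (isConeOf_map R.iShriek hconeS)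
        (asIso (R.adj₂.unit.app V₁)) hM₁
    have hMjp : M₂ (R.jUpperStar.map p) :=
      IFS_right_arrowIso hC γ₂.symm (Iso.refl _)
        (by rw [Iso.refl_hom, Category.comp_id, Iso.symm_hom, ← hγ₂r, Iso.inv_hom_id_assoc]) hM₂
    have hE₂t : E₂ (R.jUpperStar.map t) :=
      IFS_left_arrowIso hC (Iso.refl _) γ₂.symm
        (by rw [Iso.refl_hom, Category.id_comp, Iso.symm_hom, ← hγ₂l, Category.assoc, Iso.hom_inv_id, Category.comp_id]) hE₂
    refine ⟨K, l, s ≫ p, ⟨?_, ?_⟩, ⟨?_, ?_⟩, ?_⟩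
    · exact IFS_left_arrowIso hA (Iso.refl _) γ₁.symm
        (by rw [Iso.refl_hom, Category.id_comp, Iso.symm_hom, ← hγ₁l, Category.assoc, Iso.hom_inv_id, Category.comp_id]) hE₁
    · refine IFS_left_arrowIso hC (Iso.refl _) (asIso (R.jUpperStar.map s)).symm ?_ hE₂t
      rw [Iso.refl_hom, Category.id_comp, Iso.symm_hom, asIso_inv, ← hls, Functor.map_comp,
        Category.assoc, IsIso.hom_inv_id, Category.comp_id]
    · refine IFS_right_arrowIso hA (Iso.refl _) (asIso (R.iShriek.map p)) ?_ hMis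
      rw [Iso.refl_hom, Category.id_comp, asIso_hom, ← Functor.map_comp]
    · refine IFS_right_arrowIso hC (asIso (R.jUpperStar.map s)).symm (Iso.refl _) ?_ hMjp
      rw [Iso.refl_hom, Category.comp_id, Iso.symm_hom, asIso_inv, Functor.map_comp,
        IsIso.inv_hom_id_assoc]
    · rw [← Category.assoc, hls, htp]
  -- LEFT_EQ
  · intro X Y f
    constructor
    · rintro ⟨hE1, hE2⟩ Z W g ⟨hM1, hM2⟩ Cl Cr hCl hCr
      refine hperp_fwd Cl Cr ?_ ?_
      · exact (hA.left_eq (R.iUpperStar.map f)).mp hE1 (R.iShriek.map g) hM1 _ _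
          (isConeOf_map R.iUpperStar hCl) (isConeOf_map R.iShriek hCr)
      · exact (hC.left_eq (R.jUpperStar.map f)).mp hE2 (R.jUpperStar.map g) hM2 _ _
          (isConeOf_map R.jUpperStar hCl) (isConeOf_map R.jUpperStar hCr)
    · intro hg
      obtain ⟨Cf, hCf⟩ := exists_cone f
      constructor
      · rw [hA.left_eq]
        intro Z W g₁ hg₁ Cl Cr hCl hCr
        have hMg : M₁ (R.iShriek.map (R.iStar.map g₁)) ∧
            M₂ (R.jUpperStar.map (R.iStar.map g₁)) := by
          constructor
          · refine IFS_right_arrowIso hA (asIso (R.adj₂.unit.app Z)) (asIso (R.adj₂.unit.app W))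
              ?_ hg₁
            simpa using (R.adj₂.unit.naturality g₁).symm
          · exact IFS_right_of_isIso hC _ (isIso_of_isZero_both (hZji Z) (hZji W) _)
        have hCP := hg (R.iStar.map g₁) hMg Cf (R.iStar.obj Cr) hCf (isConeOf_map R.iStar hCr)
        obtain ⟨eL⟩ := cone_unique hCl (isConeOf_map R.iUpperStar hCf)
        show PerpObj Cl Cr
        refine perpObj_of_iso eL (Iso.refl _) ?_
        constructor
        · exact allZero_equiv (R.adj₁.homEquiv _ _).symm hCP.1
        · exact allZero_equiv (R.adj₁.homEquiv _ _).symm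
            (allZero_target_iso ((R.iStar.commShiftIso (-1 : ℤ)).app Cr) hCP.2)
      · rw [hC.left_eq]
        intro Z W g₂ hg₂ Cl Cr hCl hCr
        have hMg : M₁ (R.iShriek.map (R.jStar.map g₂)) ∧
            M₂ (R.jUpperStar.map (R.jStar.map g₂)) := by
          constructor
          · exact IFS_right_of_isIso hA _ (isIso_of_isZero_both (hZij Z) (hZij W) _)
          · have comm0 : R.jUpperStar.map (R.jStar.map g₂) ≫ R.adj₄.counit.app W
                = R.adj₄.counit.app Z ≫ g₂ := by
              simpa using R.adj₄.counit.naturality g₂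
            exact IFS_right_arrowIso hC (asIso (R.adj₄.counit.app Z)).symm
              (asIso (R.adj₄.counit.app W)).symm
              (arrow_comm_symm (asIso (R.adj₄.counit.app Z)) (asIso (R.adj₄.counit.app W)) comm0)
              hg₂
        have hCP := hg (R.jStar.map g₂) hMg Cf (R.jStar.obj Cr) hCf (isConeOf_map R.jStar hCr)
        obtain ⟨eL⟩ := cone_unique hCl (isConeOf_map R.jUpperStar hCf)
        show PerpObj Cl Cr
        refine perpObj_of_iso eL (Iso.refl _) ?_
        constructor
        · exact allZero_equiv (R.adj₄.homEquiv _ _).symm hCP.1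
        · exact allZero_equiv (R.adj₄.homEquiv _ _).symm
            (allZero_target_iso ((R.jStar.commShiftIso (-1 : ℤ)).app Cr) hCP.2)
  -- RIGHT_EQ
  · intro Z W g
    constructor
    · rintro ⟨hM1, hM2⟩ X Y f ⟨hE1, hE2⟩ Cl Cr hCl hCr
      refine hperp_fwd Cl Cr ?_ ?_
      · exact (hA.right_eq (R.iShriek.map g)).mp hM1 (R.iUpperStar.map f) hE1 _ _
          (isConeOf_map R.iUpperStar hCl) (isConeOf_map R.iShriek hCr)
      · exact (hC.right_eq (R.jUpperStar.map g)).mp hM2 (R.jUpperStar.map f) hE2 _ _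
          (isConeOf_map R.jUpperStar hCl) (isConeOf_map R.jUpperStar hCr)
    · intro hf
      obtain ⟨Cg, hCg⟩ := exists_cone g
      constructor
      · rw [hA.right_eq]
        intro X Y f₁ hf₁ Cl Cr hCl hCr
        have hEf : E₁ (R.iUpperStar.map (R.iStar.map f₁)) ∧
            E₂ (R.jUpperStar.map (R.iStar.map f₁)) := by
          constructor
          · have comm0 : R.iUpperStar.map (R.iStar.map f₁) ≫ R.adj₁.counit.app Y
                = R.adj₁.counit.app X ≫ f₁ := by
              simpa using R.adj₁.counit.naturality f₁
            exact IFS_left_arrowIso hA (asIso (R.adj₁.counit.app X)).symm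
              (asIso (R.adj₁.counit.app Y)).symm
              (arrow_comm_symm (asIso (R.adj₁.counit.app X)) (asIso (R.adj₁.counit.app Y)) comm0)
              hf₁
          · exact IFS_left_of_isIso hC _ (isIso_of_isZero_both (hZji X) (hZji Y) _)
        have hCP := hf (R.iStar.map f₁) hEf (R.iStar.obj Cl) Cg (isConeOf_map R.iStar hCl) hCg
        obtain ⟨eR⟩ := cone_unique hCr (isConeOf_map R.iShriek hCg)
        show PerpObj Cl Cr
        refine perpObj_of_iso (Iso.refl _) eR ?_
        constructor
        · exact allZero_equiv (R.adj₂.homEquiv _ _) hCP.1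
        · exact allZero_target_iso ((R.iShriek.commShiftIso (-1 : ℤ)).app Cg).symm
            (allZero_equiv (R.adj₂.homEquiv _ _) hCP.2)
      · rw [hC.right_eq]
        intro X Y f₂ hf₂ Cl Cr hCl hCr
        have hEf : E₁ (R.iUpperStar.map (R.jShriek.map f₂)) ∧
            E₂ (R.jUpperStar.map (R.jShriek.map f₂)) := by
          constructor
          · exact IFS_left_of_isIso hA _ (isIso_of_isZero_both (hZij' X) (hZij' Y) _)
          · refine IFS_left_arrowIso hC (asIso (R.adj₃.unit.app X)) (asIso (R.adj₃.unit.app Y))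
              ?_ hf₂
            simpa using (R.adj₃.unit.naturality f₂).symm
        have hCP := hf (R.jShriek.map f₂) hEf (R.jShriek.obj Cl) Cg (isConeOf_map R.jShriek hCl) hCg
        obtain ⟨eR⟩ := cone_unique hCr (isConeOf_map R.jUpperStar hCg)
        show PerpObj Cl Cr
        refine perpObj_of_iso (Iso.refl _) eR ?_
        constructor
        · exact allZero_equiv (R.adj₃.homEquiv _ _) hCP.1
        · exact allZero_target_iso ((R.jUpperStar.commShiftIso (-1 : ℤ)).app Cg).symm
            (allZero_equiv (R.adj₃.homEquiv _ _) hCP.2)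

end RecollementFS
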